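/- Let Φ_i and Φ_j be disjoint nonempty subsets of X with diameters D(Φ_i) > 0 and D(Φ_j) > 0, with nonempty finite reporting ranges Y_i and Y_j respectively whose intersection Y_i ∩ Y_j is nonempty, and let 0 ≤ ε_i ≤ ε_0 and 0 ≤ ε_j ≤ ε_0. Define the exponential mechanism f(x'|x) = exp(−ε_i·d(x,x')/(2D(Φ_i))) / Σ_{s∈Y_i} exp(−ε_i·d(x,s)/(2D(Φ_i))) for x ∈ Φ_i, x' ∈ Y_i, and f(x'|y) = exp(−ε_j·d(y,x')/(2D(Φ_j))) / Σ_{t∈Y_j} exp(−ε_j·d(y,t)/(2D(Φ_j))) for y ∈ Φ_j, x' ∈ Y_j. Then for all x ∈ Φ_i, y ∈ Φ_j and x' ∈ Y_i ∩ Y_j, f(x'|x)/f(x'|y) ≤ (|Y_j|/|Y_i|) · exp((ε_0/2)·(D(Y_j)/D(Φ_j) + D(Y_i)/D(Φ_i))), where |Y| denotes the cardinality and D(Y) the diameter of Y. -/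

import Mathlib

open Finset Real

/-- Let Φ_i, Φ_j be disjoint nonempty subsets of X with positive
diameters D_i, D_j and nonempty finite reporting ranges Y_i, Y_j whose intersection is
nonempty, and let 0 ≤ ε_i ≤ ε_0, 0 ≤ ε_j ≤ ε_0. For the exponential mechanisms on
Φ_i (with Y_i, ε_i) and Φ_j (with Y_j, ε_j), for all x ∈ Φ_i, y ∈ Φ_j, x' ∈ Y_i ∩ Y_j,
f(x'|x)/f(x'|y) ≤ (|Y_j|/|Y_i|)·exp((ε_0/2)·(D(Y_j)/D_j + D(Y_i)/D_i)). -/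
theorem stmt_10 {X : Type*} [Fintype X] [DecidableEq X] [Nonempty X] [MetricSpace X]
    (Φi Φj : Finset X) (hΦi : Φi.Nonempty) (hΦj : Φj.Nonempty)
    (hdisj : Disjoint Φi Φj)
    (Di Dj : ℝ) (hDipos : 0 < Di) (hDjpos : 0 < Dj)
    (hDiub : ∀ u ∈ Φi, ∀ v ∈ Φi, dist u v ≤ Di)
    (hDimem : ∃ u ∈ Φi, ∃ v ∈ Φi, dist u v = Di)
    (hDjub : ∀ u ∈ Φj, ∀ v ∈ Φj, dist u v ≤ Dj)
    (hDjmem : ∃ u ∈ Φj, ∃ v ∈ Φj, dist u v = Dj)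
    (Yi Yj : Finset X) (hYi : Yi.Nonempty) (hYj : Yj.Nonempty)
    (hYij : (Yi ∩ Yj).Nonempty)
    (DYi DYj : ℝ)
    (hDYiub : ∀ u ∈ Yi, ∀ v ∈ Yi, dist u v ≤ DYi)
    (hDYimem : ∃ u ∈ Yi, ∃ v ∈ Yi, dist u v = DYi)
    (hDYjub : ∀ u ∈ Yj, ∀ v ∈ Yj, dist u v ≤ DYj)
    (hDYjmem : ∃ u ∈ Yj, ∃ v ∈ Yj, dist u v = DYj)
    (εi εj ε₀ : ℝ) (hεi : 0 ≤ εi) (hεiε₀ : εi ≤ ε₀) (hεj : 0 ≤ εj) (hεjε₀ : εj ≤ ε₀) :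
    ∀ x ∈ Φi, ∀ y ∈ Φj, ∀ x' ∈ Yi ∩ Yj,
      (Real.exp (-(εi * dist x x') / (2 * Di)) /
          ∑ s ∈ Yi, Real.exp (-(εi * dist x s) / (2 * Di))) /
        (Real.exp (-(εj * dist y x') / (2 * Dj)) /
          ∑ t ∈ Yj, Real.exp (-(εj * dist y t) / (2 * Dj))) ≤
      ((Yj.card : ℝ) / (Yi.card : ℝ)) *
        Real.exp ((ε₀ / 2) * (DYj / Dj + DYi / Di)) := by
  intro x hx y hy x' hx'
  rw [Finset.mem_inter] at hx'
  obtain ⟨hx'i, hx'j⟩ := hx'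
  have hDYi0 : 0 ≤ DYi := by
    obtain ⟨u, hu, v, hv, h⟩ := hDYimem; rw [← h]; exact dist_nonneg
  have hDYj0 : 0 ≤ DYj := by
    obtain ⟨u, hu, v, hv, h⟩ := hDYjmem; rw [← h]; exact dist_nonneg
  have hε₀ : 0 ≤ ε₀ := hεi.trans hεiε₀
  set c1 := εi * DYi / (2 * Di) with hc1
  set c2 := εj * DYj / (2 * Dj) with hc2
  have hc1nn : 0 ≤ c1 := by positivity
  have hc2nn : 0 ≤ c2 := by positivity
  set A := Real.exp (-(εi * dist x x') / (2 * Di)) with hAdef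
  set B := Real.exp (-(εj * dist y x') / (2 * Dj)) with hBdef
  set SA := ∑ s ∈ Yi, Real.exp (-(εi * dist x s) / (2 * Di)) with hSAdef
  set SB := ∑ t ∈ Yj, Real.exp (-(εj * dist y t) / (2 * Dj)) with hSBdef
  have hApos : 0 < A := Real.exp_pos _
  have hBpos : 0 < B := Real.exp_pos _
  have hSApos : 0 < SA := Finset.sum_pos (fun s _ => Real.exp_pos _) hYi
  have hSBpos : 0 < SB := Finset.sum_pos (fun t _ => Real.exp_pos _) hYj
  have hcard_i : 0 < (Yi.card : ℝ) := by exact_mod_cast Finset.card_pos.mpr hYi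
  have hcard_j : 0 < (Yj.card : ℝ) := by exact_mod_cast Finset.card_pos.mpr hYj
  -- lower bound for SA
  have hSA : (Yi.card : ℝ) * (A * Real.exp (-c1)) ≤ SA := by
    have h := Finset.card_nsmul_le_sum Yi
      (fun s => Real.exp (-(εi * dist x s) / (2 * Di))) (A * Real.exp (-c1)) ?_
    · simpa [nsmul_eq_mul] using h
    · intro s hs
      rw [hAdef, ← Real.exp_add]
      apply Real.exp_le_exp.mpr
      have hd : dist x s ≤ dist x x' + DYi :=
        le_trans (dist_triangle x x' s) (by linarith [hDYiub x' hx'i s hs])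
      rw [hc1, ← neg_div, ← add_div, div_le_div_iff₀ (by positivity) (by positivity)]
      nlinarith [mul_le_mul_of_nonneg_left hd hεi]
  -- upper bound for SB
  have hSB : SB ≤ (Yj.card : ℝ) * (B * Real.exp c2) := by
    have h := Finset.sum_le_card_nsmul Yj
      (fun t => Real.exp (-(εj * dist y t) / (2 * Dj))) (B * Real.exp c2) ?_
    · simpa [nsmul_eq_mul] using h
    · intro t ht
      rw [hBdef, ← Real.exp_add]
      apply Real.exp_le_exp.mpr
      have hd : dist y x' ≤ dist y t + DYj :=
        le_trans (dist_triangle y t x') (by linarith [hDYjub t ht x' hx'j])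
      rw [hc2, ← add_div, div_le_div_iff₀ (by positivity) (by positivity)]
      nlinarith [mul_le_mul_of_nonneg_left hd hεj]
  -- bound the two factors
  have hfac1 : A / SA ≤ Real.exp c1 / (Yi.card : ℝ) := by
    have h1 : A / SA ≤ A / ((Yi.card : ℝ) * (A * Real.exp (-c1))) :=
      div_le_div_of_nonneg_left hApos.le (by positivity) hSA
    have h2 : A / ((Yi.card : ℝ) * (A * Real.exp (-c1))) = Real.exp c1 / (Yi.card : ℝ) := by
      rw [Real.exp_neg]
      field_simp
    linarith [h1, h2.le]
  have hfac2 : SB / B ≤ (Yj.card : ℝ) * Real.exp c2 := by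
    rw [div_le_iff₀ hBpos]
    calc SB ≤ (Yj.card : ℝ) * (B * Real.exp c2) := hSB
      _ = (Yj.card : ℝ) * Real.exp c2 * B := by ring
  -- exponent comparison
  have hexp : Real.exp c1 * Real.exp c2 ≤ Real.exp ((ε₀ / 2) * (DYj / Dj + DYi / Di)) := by
    rw [← Real.exp_add]
    apply Real.exp_le_exp.mpr
    have h1 : c1 ≤ ε₀ * DYi / (2 * Di) := by
      rw [hc1]; gcongr
    have h2 : c2 ≤ ε₀ * DYj / (2 * Dj) := by
      rw [hc2]; gcongr
    have he : (ε₀ / 2) * (DYj / Dj + DYi / Di) = ε₀ * DYj / (2 * Dj) + ε₀ * DYi / (2 * Di) := by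
      field_simp
    rw [he]; linarith
  -- combine
  have heq : (A / SA) / (B / SB) = (A / SA) * (SB / B) := by
    field_simp
  rw [heq]
  calc (A / SA) * (SB / B)
      ≤ (Real.exp c1 / (Yi.card : ℝ)) * ((Yj.card : ℝ) * Real.exp c2) := by
        apply mul_le_mul hfac1 hfac2 (by positivity) (by positivity)
    _ = ((Yj.card : ℝ) / (Yi.card : ℝ)) * (Real.exp c1 * Real.exp c2) := by
        field_simp
    _ ≤ ((Yj.card : ℝ) / (Yi.card : ℝ)) * Real.exp ((ε₀ / 2) * (DYj / Dj + DYi / Di)) := by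
        apply mul_le_mul_of_nonneg_left hexp (by positivity)
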